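/- For every integer n ≥ 2, the number of triangles (3-element sets of pairwise adjacent vertices) in the occurrence graph G_{12}(id_n) of the pattern 12 in the identity permutation id_n equals (n-2)·C(n,3). -/

import Mathlib

open Finset

/-- `s` is an occurrence (index set) of the pattern `p` in the permutation `π`:
`s` has `k` elements and, listed increasingly, `π` on `s` is order isomorphic to `p`. -/
def IsOccurrence {k n : ℕ} (p : Equiv.Perm (Fin k)) (π : Equiv.Perm (Fin n))
    (s : Finset (Fin n)) : Prop :=
  ∃ h : s.card = k, ∀ a b : Fin k,
    π ↑(s.orderIsoOfFin h a) < π ↑(s.orderIsoOfFin h b) ↔ p a < p b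

/-- The occurrence set `V_p(π)` of all occurrence index sets of `p` in `π`. -/
def OccSet {k n : ℕ} (p : Equiv.Perm (Fin k)) (π : Equiv.Perm (Fin n)) :
    Set (Finset (Fin n)) :=
  {s | IsOccurrence p π s}

/-- The occurrence graph `G_p(π)`: vertices are the occurrences of `p` in `π`,
two occurrences adjacent iff they differ in exactly one element. -/
def OccGraph {k n : ℕ} (p : Equiv.Perm (Fin k)) (π : Equiv.Perm (Fin n)) :
    SimpleGraph {s : Finset (Fin n) // IsOccurrence p π s} where
  Adj u v := (u.val \ v.val).card = 1 ∧ (v.val \ u.val).card = 1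
  symm := ⟨fun u v h => ⟨h.2, h.1⟩⟩
  loopless := ⟨fun u h => by simp at h⟩

lemma occ_iff {n : ℕ} (s : Finset (Fin n)) :
    IsOccurrence (Equiv.refl (Fin 2)) (Equiv.refl (Fin n)) s ↔ s.card = 2 := by
  constructor
  · rintro ⟨h, -⟩; exact h
  · intro h
    refine ⟨h, fun a b => ?_⟩
    simp only [Equiv.refl_apply]
    rw [Subtype.coe_lt_coe, OrderIso.lt_iff_lt]

abbrev V (n : ℕ) := {s : Finset (Fin n) // IsOccurrence (Equiv.refl (Fin 2)) (Equiv.refl (Fin n)) s}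

lemma vcard {n : ℕ} (u : V n) : u.val.card = 2 := (occ_iff _).1 u.2

lemma adj_iff {n : ℕ} (u v : V n) :
    (OccGraph (Equiv.refl (Fin 2)) (Equiv.refl (Fin n))).Adj u v ↔ (u.val ∩ v.val).card = 1 := by
  have h1 : (u.val \ v.val).card + (u.val ∩ v.val).card = 2 := by
    rw [Finset.card_sdiff_add_card_inter, vcard]
  have h2 : (v.val \ u.val).card + (v.val ∩ u.val).card = 2 := by
    rw [Finset.card_sdiff_add_card_inter, vcard]
  rw [Finset.inter_comm v.val u.val] at h2
  constructor
  · rintro ⟨a, b⟩; omega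
  · intro h; exact ⟨by omega, by omega⟩

lemma pair_of_mem {α : Type*} [DecidableEq α] {u : Finset α} {p : α}
    (hc : u.card = 2) (hp : p ∈ u) : ∃ a, a ≠ p ∧ u = {p, a} := by
  obtain ⟨x, y, hxy, rfl⟩ := Finset.card_eq_two.1 hc
  simp only [Finset.mem_insert, Finset.mem_singleton] at hp
  rcases hp with rfl | rfl
  · exact ⟨y, fun h => hxy h.symm, rfl⟩
  · exact ⟨x, hxy, by rw [Finset.pair_comm]⟩

lemma inter_pair_pair {α : Type*} [DecidableEq α] {x a b : α}
    (hab : a ≠ b) (hxa : x ≠ a) (hxb : x ≠ b) :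
    ({x, a} : Finset α) ∩ {x, b} = {x} := by
  ext y
  simp only [Finset.mem_inter, Finset.mem_insert, Finset.mem_singleton]
  constructor
  · rintro ⟨h1 | h1, h2 | h2⟩ <;> simp_all
  · rintro rfl; simp

lemma struct {n : ℕ} {t : Finset (V n)}
    (ht : (OccGraph (Equiv.refl (Fin 2)) (Equiv.refl (Fin n))).IsNClique 3 t) :
    (∃ a b c : Fin n, a ≠ b ∧ a ≠ c ∧ b ≠ c ∧
      t.image Subtype.val = {{a, b}, {a, c}, {b, c}}) ∨
    (∃ x a b c : Fin n, x ≠ a ∧ x ≠ b ∧ x ≠ c ∧ a ≠ b ∧ a ≠ c ∧ b ≠ c ∧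
      t.image Subtype.val = {{x, a}, {x, b}, {x, c}}) := by
  obtain ⟨hcl, hcard⟩ := (SimpleGraph.isNClique_iff _).1 ht
  obtain ⟨u, v, w, huv, huw, hvw, rfl⟩ := Finset.card_eq_three.1 hcard
  have mu : u ∈ ({u, v, w} : Finset (V n)) := by simp
  have mv : v ∈ ({u, v, w} : Finset (V n)) := by simp
  have mw : w ∈ ({u, v, w} : Finset (V n)) := by simp
  have auv := (adj_iff u v).1 (hcl mu mv (by exact_mod_cast huv))
  have auw := (adj_iff u w).1 (hcl mu mw (by exact_mod_cast huw))
  have avw := (adj_iff v w).1 (hcl mv mw (by exact_mod_cast hvw))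
  obtain ⟨p, hp⟩ := Finset.card_eq_one.1 auv
  have hpu : p ∈ u.val := (Finset.mem_inter.1 (hp ▸ Finset.mem_singleton_self p)).1
  have hpv : p ∈ v.val := (Finset.mem_inter.1 (hp ▸ Finset.mem_singleton_self p)).2
  obtain ⟨a, hap, hu⟩ := pair_of_mem (vcard u) hpu
  obtain ⟨b, hbp, hv⟩ := pair_of_mem (vcard v) hpv
  have hvalne : u.val ≠ v.val := fun h => huv (Subtype.ext h)
  have hab : a ≠ b := by rintro rfl; exact hvalne (hu.trans hv.symm)
  have himg : ({u, v, w} : Finset (V n)).image Subtype.val = {u.val, v.val, w.val} := by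
    simp [Finset.image_insert]
  by_cases hpw : p ∈ w.val
  · obtain ⟨c, hcp, hw⟩ := pair_of_mem (vcard w) hpw
    have hac : a ≠ c := by
      rintro rfl; exact huw (Subtype.ext (hu.trans hw.symm))
    have hbc : b ≠ c := by
      rintro rfl; exact hvw (Subtype.ext (hv.trans hw.symm))
    right
    exact ⟨p, a, b, c, Ne.symm hap, Ne.symm hbp, Ne.symm hcp, hab, hac, hbc,
      by rw [himg, hu, hv, hw]⟩
  · -- triangle case: w = {a, b}
    obtain ⟨q, hq⟩ := Finset.card_eq_one.1 auw
    have hqu : q ∈ u.val := (Finset.mem_inter.1 (hq ▸ Finset.mem_singleton_self q)).1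
    have hqw : q ∈ w.val := (Finset.mem_inter.1 (hq ▸ Finset.mem_singleton_self q)).2
    have haw : a ∈ w.val := by
      rw [hu] at hqu
      simp only [Finset.mem_insert, Finset.mem_singleton] at hqu
      rcases hqu with rfl | rfl
      · exact absurd hqw hpw
      · exact hqw
    obtain ⟨r, hr⟩ := Finset.card_eq_one.1 avw
    have hrv : r ∈ v.val := (Finset.mem_inter.1 (hr ▸ Finset.mem_singleton_self r)).1
    have hrw : r ∈ w.val := (Finset.mem_inter.1 (hr ▸ Finset.mem_singleton_self r)).2
    have hbw : b ∈ w.val := by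
      rw [hv] at hrv
      simp only [Finset.mem_insert, Finset.mem_singleton] at hrv
      rcases hrv with rfl | rfl
      · exact absurd hrw hpw
      · exact hrw
    have hw : w.val = {a, b} := by
      refine (Finset.eq_of_subset_of_card_le ?_ ?_).symm
      · intro y hy
        simp only [Finset.mem_insert, Finset.mem_singleton] at hy
        rcases hy with rfl | rfl
        · exact haw
        · exact hbw
      · rw [vcard, Finset.card_pair hab]
    left
    refine ⟨p, a, b, Ne.symm hap, Ne.symm hbp, hab, ?_⟩
    rw [himg, hu, hv, hw]

variable {α : Type*} [DecidableEq α]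

lemma union3_star {x a b c : α} :
    ({x, a} : Finset α) ∪ ({x, b} ∪ {x, c}) = {x, a, b, c} := by
  ext y
  simp only [Finset.mem_union, Finset.mem_insert, Finset.mem_singleton]
  tauto

lemma union3_tri {a b c : α} :
    ({a, b} : Finset α) ∪ ({a, c} ∪ {b, c}) = {a, b, c} := by
  ext y
  simp only [Finset.mem_union, Finset.mem_insert, Finset.mem_singleton]
  tauto

lemma inter3_star {x a b c : α} (hab : a ≠ b) (hac : a ≠ c) (hbc : b ≠ c)
    (hxa : x ≠ a) (hxb : x ≠ b) (hxc : x ≠ c) :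
    ({x, a} : Finset α) ∩ ({x, b} ∩ {x, c}) = {x} := by
  rw [inter_pair_pair hbc hxb hxc]
  ext y
  simp only [Finset.mem_inter, Finset.mem_insert, Finset.mem_singleton]
  constructor
  · rintro ⟨h1 | h1, h2⟩ <;> simp_all
  · rintro rfl; simp

lemma card4_star {x a b c : α} (hab : a ≠ b) (hac : a ≠ c) (hbc : b ≠ c)
    (hxa : x ≠ a) (hxb : x ≠ b) (hxc : x ≠ c) :
    ({x, a, b, c} : Finset α).card = 4 := by
  rw [Finset.card_insert_of_notMem (by simp [hxa, hxb, hxc]),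
    Finset.card_insert_of_notMem (by simp [hab, hac]),
    Finset.card_insert_of_notMem (by simp [hbc]), Finset.card_singleton]

lemma sdiff_star {x a b c : α} (hxa : x ≠ a) (hxb : x ≠ b) (hxc : x ≠ c) :
    ({x, a, b, c} : Finset α) \ {x} = {a, b, c} := by
  ext y
  simp only [Finset.mem_sdiff, Finset.mem_insert, Finset.mem_singleton]
  constructor
  · rintro ⟨h1 | h1, h2⟩ <;> simp_all
  · rintro (rfl | rfl | rfl) <;> simp_all [eq_comm]

lemma image_val_inj {n : ℕ} {t t' : Finset (V n)}
    (h : t.image Subtype.val = t'.image Subtype.val) : t = t' :=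
  Finset.image_injective Subtype.val_injective h

lemma sup_val {n : ℕ} (t : Finset (V n)) :
    t.sup Subtype.val = (t.image Subtype.val).sup id := by
  rw [Finset.sup_image]; rfl

lemma inf_val {n : ℕ} (t : Finset (V n)) :
    t.inf Subtype.val = (t.image Subtype.val).inf id := by
  rw [Finset.inf_image]; rfl

lemma clique_of {n : ℕ} (u v w : V n) (h1 : u ≠ v) (h2 : u ≠ w) (h3 : v ≠ w)
    (huv : (u.val ∩ v.val).card = 1) (huw : (u.val ∩ w.val).card = 1)
    (hvw : (v.val ∩ w.val).card = 1) :
    (OccGraph (Equiv.refl (Fin 2)) (Equiv.refl (Fin n))).IsNClique 3 {u, v, w} := by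
  have A1 := (adj_iff u v).2 huv
  have A2 := (adj_iff u w).2 huw
  have A3 := (adj_iff v w).2 hvw
  refine (SimpleGraph.isNClique_iff _).2 ⟨?_, ?_⟩
  · intro p hp q hq hne
    simp only [Finset.coe_insert, Set.mem_insert_iff, Finset.coe_singleton,
      Set.mem_singleton_iff] at hp hq
    rcases hp with rfl | rfl | rfl <;> rcases hq with rfl | rfl | rfl <;>
      first
        | exact absurd rfl hne
        | exact A1 | exact A1.symm | exact A2 | exact A2.symm
        | exact A3 | exact A3.symm
  · rw [Finset.card_insert_of_notMem (by simp [h1, h2]),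
      Finset.card_insert_of_notMem (by simp [h3]), Finset.card_singleton]

lemma image_eq_powersetCard {n : ℕ} {t : Finset (V n)}
    (hcl : (OccGraph (Equiv.refl (Fin 2)) (Equiv.refl (Fin n))).IsNClique 3 t)
    (hU : (t.sup Subtype.val).card = 3) :
    t.image Subtype.val = Finset.powersetCard 2 (t.sup Subtype.val) := by
  have h1 : t.image Subtype.val ⊆ Finset.powersetCard 2 (t.sup Subtype.val) := by
    intro u hu
    obtain ⟨v, hv, rfl⟩ := Finset.mem_image.1 hu
    exact Finset.mem_powersetCard.2 ⟨Finset.le_sup hv, vcard v⟩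
  have h2 : (Finset.powersetCard 2 (t.sup Subtype.val)).card ≤
      (t.image Subtype.val).card := by
    rw [Finset.card_powersetCard, hU,
      Finset.card_image_of_injective t Subtype.val_injective, hcl.2]
    decide
  exact Finset.eq_of_subset_of_card_le h1 h2

lemma star_data {n : ℕ} {t : Finset (V n)}
    (hcl : (OccGraph (Equiv.refl (Fin 2)) (Equiv.refl (Fin n))).IsNClique 3 t)
    (hU : (t.sup Subtype.val).card ≠ 3) :
    ∃ x a b c : Fin n, x ≠ a ∧ x ≠ b ∧ x ≠ c ∧ a ≠ b ∧ a ≠ c ∧ b ≠ c ∧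
      t.image Subtype.val = {{x, a}, {x, b}, {x, c}} ∧
      t.sup Subtype.val = {x, a, b, c} ∧ t.inf Subtype.val = {x} := by
  rcases struct hcl with ⟨a, b, c, hab, hac, hbc, him⟩ |
    ⟨x, a, b, c, hxa, hxb, hxc, hab, hac, hbc, him⟩
  · exfalso
    apply hU
    have hsup : t.sup Subtype.val = ({a, b, c} : Finset (Fin n)) := by
      rw [sup_val, him, Finset.sup_insert, Finset.sup_insert, Finset.sup_singleton,
        id_eq, id_eq, id_eq]
      exact union3_tri
    rw [hsup, Finset.card_insert_of_notMem (by simp [hab, hac]),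
      Finset.card_pair hbc]
  · refine ⟨x, a, b, c, hxa, hxb, hxc, hab, hac, hbc, him, ?_, ?_⟩
    · rw [sup_val, him, Finset.sup_insert, Finset.sup_insert, Finset.sup_singleton,
        id_eq, id_eq, id_eq]
      exact union3_star
    · rw [inf_val, him, Finset.inf_insert, Finset.inf_insert, Finset.inf_singleton,
        id_eq, id_eq, id_eq]
      exact inter3_star hab hac hbc hxa hxb hxc

lemma star_image_formula {n : ℕ} {t : Finset (V n)}
    (hcl : (OccGraph (Equiv.refl (Fin 2)) (Equiv.refl (Fin n))).IsNClique 3 t)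
    (hU : (t.sup Subtype.val).card ≠ 3) :
    t.image Subtype.val =
      ((t.sup Subtype.val) \ (t.inf Subtype.val)).image
        (fun y => t.inf Subtype.val ∪ {y}) := by
  obtain ⟨x, a, b, c, hxa, hxb, hxc, hab, hac, hbc, him, hsup, hinf⟩ :=
    star_data hcl hU
  rw [him, hsup, hinf, sdiff_star hxa hxb hxc]
  simp [Finset.image_insert, ← Finset.insert_eq]

lemma card_S3 {n : ℕ} (S3 : Finset (Finset (V n)))
    (hS3 : ∀ t, t ∈ S3 ↔
      (OccGraph (Equiv.refl (Fin 2)) (Equiv.refl (Fin n))).IsNClique 3 t ∧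
      (t.sup Subtype.val).card = 3) :
    S3.card = n.choose 3 := by
  have key : S3.card = (Finset.powersetCard 3 (univ : Finset (Fin n))).card := by
    refine Finset.card_bij (fun t _ => t.sup Subtype.val) ?_ ?_ ?_
    · intro t ht
      exact Finset.mem_powersetCard.2 ⟨Finset.subset_univ _, ((hS3 t).1 ht).2⟩
    · intro t ht t' ht' h
      obtain ⟨hcl, hU⟩ := (hS3 t).1 ht
      obtain ⟨hcl', hU'⟩ := (hS3 t').1 ht'
      have h' : t.sup Subtype.val = t'.sup Subtype.val := h
      apply image_val_inj
      rw [image_eq_powersetCard hcl hU, image_eq_powersetCard hcl' hU', h']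
    · intro T hT
      obtain ⟨-, hTc⟩ := Finset.mem_powersetCard.1 hT
      obtain ⟨a, b, c, hab, hac, hbc, rfl⟩ := Finset.card_eq_three.1 hTc
      have hsup : (({⟨{a, b}, (occ_iff _).2 (Finset.card_pair hab)⟩,
               ⟨{a, c}, (occ_iff _).2 (Finset.card_pair hac)⟩,
               ⟨{b, c}, (occ_iff _).2 (Finset.card_pair hbc)⟩} : Finset (V n))).sup
               Subtype.val = ({a, b, c} : Finset (Fin n)) := by
        rw [Finset.sup_insert, Finset.sup_insert, Finset.sup_singleton]
        exact union3_tri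
      refine ⟨{⟨{a, b}, (occ_iff _).2 (Finset.card_pair hab)⟩,
               ⟨{a, c}, (occ_iff _).2 (Finset.card_pair hac)⟩,
               ⟨{b, c}, (occ_iff _).2 (Finset.card_pair hbc)⟩}, ?_, ?_⟩
      · refine (hS3 _).2 ⟨?_, ?_⟩
        · refine clique_of _ _ _ ?_ ?_ ?_ ?_ ?_ ?_
          · intro h
            have hv : ({a, b} : Finset (Fin n)) = {a, c} := congrArg Subtype.val h
            have hm : b ∈ ({a, c} : Finset (Fin n)) := hv ▸
              Finset.mem_insert_of_mem (Finset.mem_singleton_self b)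
            simp [hab.symm, hbc] at hm
          · intro h
            have hv : ({a, b} : Finset (Fin n)) = {b, c} := congrArg Subtype.val h
            have hm : a ∈ ({b, c} : Finset (Fin n)) := hv ▸
              Finset.mem_insert_self a {b}
            simp [hab, hac] at hm
          · intro h
            have hv : ({a, c} : Finset (Fin n)) = {b, c} := congrArg Subtype.val h
            have hm : a ∈ ({b, c} : Finset (Fin n)) := hv ▸
              Finset.mem_insert_self a {c}
            simp [hab, hac] at hm
          · show (({a, b} : Finset (Fin n)) ∩ {a, c}).card = 1
            rw [inter_pair_pair hbc hab hac]
            exact Finset.card_singleton a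
          · show (({a, b} : Finset (Fin n)) ∩ {b, c}).card = 1
            rw [Finset.pair_comm a b,
              show (({b, a} : Finset (Fin n)) ∩ {b, c}) = {b} from
              inter_pair_pair hac hab.symm hbc]
            exact Finset.card_singleton b
          · show (({a, c} : Finset (Fin n)) ∩ {b, c}).card = 1
            rw [Finset.pair_comm a c, Finset.pair_comm b c,
              show (({c, a} : Finset (Fin n)) ∩ {c, b}) = {c} from
              inter_pair_pair hab hac.symm hbc.symm]
            exact Finset.card_singleton c
        · rw [hsup]
          rw [Finset.card_insert_of_notMem (by simp [hab, hac]),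
            Finset.card_pair hbc]
      · exact hsup
  rw [key, Finset.card_powersetCard, Finset.card_univ, Fintype.card_fin]

lemma card_S4 {n : ℕ} (S4 : Finset (Finset (V n)))
    (hS4 : ∀ t, t ∈ S4 ↔
      (OccGraph (Equiv.refl (Fin 2)) (Equiv.refl (Fin n))).IsNClique 3 t ∧
      (t.sup Subtype.val).card ≠ 3) :
    S4.card = n.choose 4 * 4 := by
  classical
  set B4 : Finset (Finset (Fin n) × Finset (Fin n)) :=
    (Finset.powersetCard 4 (univ : Finset (Fin n))).biUnion
      (fun U => U.image (fun x => (({x} : Finset (Fin n)), U))) with hB4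
  have key : S4.card = B4.card := by
    refine Finset.card_bij (fun t _ => (t.inf Subtype.val, t.sup Subtype.val)) ?_ ?_ ?_
    · intro t ht
      obtain ⟨hcl, hU⟩ := (hS4 t).1 ht
      obtain ⟨x, a, b, c, hxa, hxb, hxc, hab, hac, hbc, him, hsup, hinf⟩ :=
        star_data hcl hU
      show (t.inf Subtype.val, t.sup Subtype.val) ∈ B4
      rw [hinf, hsup]
      refine Finset.mem_biUnion.2 ⟨{x, a, b, c},
        Finset.mem_powersetCard.2 ⟨Finset.subset_univ _,
          card4_star hab hac hbc hxa hxb hxc⟩,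
        Finset.mem_image.2 ⟨x, Finset.mem_insert_self _ _, rfl⟩⟩
    · intro t ht t' ht' h
      obtain ⟨hcl, hU⟩ := (hS4 t).1 ht
      obtain ⟨hcl', hU'⟩ := (hS4 t').1 ht'
      have h' : (t.inf Subtype.val, t.sup Subtype.val) =
          (t'.inf Subtype.val, t'.sup Subtype.val) := h
      have h1 : t.inf Subtype.val = t'.inf Subtype.val := congrArg Prod.fst h'
      have h2 : t.sup Subtype.val = t'.sup Subtype.val := congrArg Prod.snd h'
      apply image_val_inj
      rw [star_image_formula hcl hU, star_image_formula hcl' hU', h1, h2]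
    · intro p hp
      obtain ⟨U, hUm, hb⟩ := Finset.mem_biUnion.1 hp
      obtain ⟨x, hxU, rfl⟩ := Finset.mem_image.1 hb
      obtain ⟨-, hUc⟩ := Finset.mem_powersetCard.1 hUm
      have hWc : (U.erase x).card = 3 := by rw [Finset.card_erase_of_mem hxU, hUc]
      obtain ⟨a, b, c, hab, hac, hbc, hW⟩ := Finset.card_eq_three.1 hWc
      have hx : x ∉ ({a, b, c} : Finset (Fin n)) := hW ▸ Finset.notMem_erase x U
      simp only [Finset.mem_insert, Finset.mem_singleton] at hx
      push_neg at hx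
      obtain ⟨hxa, hxb, hxc⟩ := hx
      have hU4 : U = ({x, a, b, c} : Finset (Fin n)) := by
        have h5 := Finset.insert_erase hxU
        rw [hW] at h5
        exact h5.symm
      have hsup : (({⟨{x, a}, (occ_iff _).2 (Finset.card_pair hxa)⟩,
               ⟨{x, b}, (occ_iff _).2 (Finset.card_pair hxb)⟩,
               ⟨{x, c}, (occ_iff _).2 (Finset.card_pair hxc)⟩} : Finset (V n))).sup
               Subtype.val = ({x, a, b, c} : Finset (Fin n)) := by
        rw [Finset.sup_insert, Finset.sup_insert, Finset.sup_singleton]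
        exact union3_star
      have hinf : (({⟨{x, a}, (occ_iff _).2 (Finset.card_pair hxa)⟩,
               ⟨{x, b}, (occ_iff _).2 (Finset.card_pair hxb)⟩,
               ⟨{x, c}, (occ_iff _).2 (Finset.card_pair hxc)⟩} : Finset (V n))).inf
               Subtype.val = ({x} : Finset (Fin n)) := by
        rw [Finset.inf_insert, Finset.inf_insert, Finset.inf_singleton]
        exact inter3_star hab hac hbc hxa hxb hxc
      refine ⟨{⟨{x, a}, (occ_iff _).2 (Finset.card_pair hxa)⟩,
               ⟨{x, b}, (occ_iff _).2 (Finset.card_pair hxb)⟩,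
               ⟨{x, c}, (occ_iff _).2 (Finset.card_pair hxc)⟩}, ?_, ?_⟩
      · refine (hS4 _).2 ⟨?_, ?_⟩
        · refine clique_of _ _ _ ?_ ?_ ?_ ?_ ?_ ?_
          · intro h
            have hv : ({x, a} : Finset (Fin n)) = {x, b} := congrArg Subtype.val h
            have hm : a ∈ ({x, b} : Finset (Fin n)) := hv ▸
              Finset.mem_insert_of_mem (Finset.mem_singleton_self a)
            simp [hxa.symm, hab] at hm
          · intro h
            have hv : ({x, a} : Finset (Fin n)) = {x, c} := congrArg Subtype.val h
            have hm : a ∈ ({x, c} : Finset (Fin n)) := hv ▸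
              Finset.mem_insert_of_mem (Finset.mem_singleton_self a)
            simp [hxa.symm, hac] at hm
          · intro h
            have hv : ({x, b} : Finset (Fin n)) = {x, c} := congrArg Subtype.val h
            have hm : b ∈ ({x, c} : Finset (Fin n)) := hv ▸
              Finset.mem_insert_of_mem (Finset.mem_singleton_self b)
            simp [hxb.symm, hbc] at hm
          · show (({x, a} : Finset (Fin n)) ∩ {x, b}).card = 1
            rw [inter_pair_pair hab hxa hxb]
            exact Finset.card_singleton x
          · show (({x, a} : Finset (Fin n)) ∩ {x, c}).card = 1
            rw [inter_pair_pair hac hxa hxc]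
            exact Finset.card_singleton x
          · show (({x, b} : Finset (Fin n)) ∩ {x, c}).card = 1
            rw [inter_pair_pair hbc hxb hxc]
            exact Finset.card_singleton x
        · rw [hsup, card4_star hab hac hbc hxa hxb hxc]
          omega
      · show (_, _) = (({x} : Finset (Fin n)), U)
        rw [hinf, hsup, hU4]
  rw [key, hB4, Finset.card_biUnion]
  · have hconst : ∀ U ∈ Finset.powersetCard 4 (univ : Finset (Fin n)),
        (U.image (fun x => (({x} : Finset (Fin n)), U))).card = 4 := by
      intro U hU
      obtain ⟨-, hUc⟩ := Finset.mem_powersetCard.1 hU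
      rw [Finset.card_image_of_injective _
        (fun x y h => Finset.singleton_injective (congrArg Prod.fst h)), hUc]
    rw [Finset.sum_congr rfl hconst, Finset.sum_const, smul_eq_mul,
      Finset.card_powersetCard, Finset.card_univ, Fintype.card_fin]
  · intro U hU U' hU' hne
    refine Finset.disjoint_left.2 fun p hp hp' => ?_
    obtain ⟨y, -, rfl⟩ := Finset.mem_image.1 hp
    obtain ⟨z, -, hz⟩ := Finset.mem_image.1 hp'
    exact hne (congrArg Prod.snd hz).symm

theorem card_triangles_occGraph_id (n : ℕ) (hn : 2 ≤ n) :
    Nat.card {t : Finset {s : Finset (Fin n) //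
        IsOccurrence (Equiv.refl (Fin 2)) (Equiv.refl (Fin n)) s} //
        (OccGraph (Equiv.refl (Fin 2)) (Equiv.refl (Fin n))).IsNClique 3 t} =
      (n - 2) * n.choose 3 := by
  classical
  rw [Nat.card_eq_fintype_card, Fintype.card_subtype]
  set P : Finset (V n) → Prop := fun t =>
    (OccGraph (Equiv.refl (Fin 2)) (Equiv.refl (Fin n))).IsNClique 3 t with hP
  have hsplit := Finset.card_filter_add_card_filter_not
    (s := (univ.filter P)) (p := fun t => (t.sup Subtype.val).card = 3)
  have h3 := card_S3 ((univ.filter P).filter fun t => (t.sup Subtype.val).card = 3)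
    (fun t => by simp [hP, and_assoc])
  have h4 := card_S4 ((univ.filter P).filter fun t => ¬(t.sup Subtype.val).card = 3)
    (fun t => by simp [hP, and_assoc])
  have harith : n.choose 3 + n.choose 4 * 4 = (n - 2) * n.choose 3 := by
    rw [Nat.choose_succ_right_eq n 3]
    rcases Nat.lt_or_ge n 3 with h | h
    · rw [Nat.choose_eq_zero_of_lt h]
      simp
    · have h1 : n.choose 3 + n.choose 3 * (n - 3) = n.choose 3 * (1 + (n - 3)) := by
        ring
      rw [h1, show 1 + (n - 3) = n - 2 by omega, Nat.mul_comm]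
  rw [← hsplit, h3, h4]
  exact harith
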